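/- arXiv:2206.09444 — 2 statements merged into one kernel-verified Lean document; each statement's English description precedes it below -/
import Mathlib

section
/- Fix y ∈ ℝ, τ ∈ (0,1), m ∈ ℝ and ν > 0. Then ∫ [ (1/2)|y − η| + (τ − 1/2)(y − η) ] φ(η; m, ν²) dη = (y − m)(Φ(y; m, ν²) + τ − 1) + ν² φ(y; m, ν²). -/
open MeasureTheory Real Filter

/-- Gaussian density with mean `m` and variance `ν ^ 2`, evaluated at `x`:
`φ(x; m, ν²) = (2πν²)^{-1/2} exp(−(x−m)²/(2ν²))`. -/
noncomputable def gpdf (m ν x : ℝ) : ℝ :=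
  (Real.sqrt (2 * Real.pi * ν ^ 2))⁻¹ * Real.exp (-((x - m) ^ 2) / (2 * ν ^ 2))

/-- Gaussian cumulative distribution function with mean `m` and variance `ν ^ 2`:
`Φ(c; m, ν²) = ∫_{−∞}^{c} φ(η; m, ν²) dη`. -/
noncomputable def gcdf (m ν c : ℝ) : ℝ := ∫ x in Set.Iio c, gpdf m ν x

lemma gpdf_eq (m ν : ℝ) :
    gpdf m ν = ProbabilityTheory.gaussianPDFReal m ⟨ν ^ 2, sq_nonneg ν⟩ := by
  ext x
  simp [gpdf, ProbabilityTheory.gaussianPDFReal]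
  rfl

lemma gpdf_nonneg (m ν x : ℝ) : 0 ≤ gpdf m ν x := by
  rw [gpdf_eq]; exact ProbabilityTheory.gaussianPDFReal_nonneg _ _ _

lemma continuous_gpdf (m ν : ℝ) : Continuous (gpdf m ν) := by
  unfold gpdf
  fun_prop

lemma integrable_gpdf (m ν : ℝ) : Integrable (gpdf m ν) := by
  rw [gpdf_eq]; exact ProbabilityTheory.integrable_gaussianPDFReal _ _

lemma integral_gpdf (m ν : ℝ) (hν : 0 < ν) : ∫ x, gpdf m ν x = 1 := by
  rw [gpdf_eq]
  exact ProbabilityTheory.integral_gaussianPDFReal_eq_one m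
    (by intro h; exact pow_ne_zero 2 hν.ne' (congrArg Subtype.val h))

lemma hasDerivAt_gpdf (m ν : ℝ) (hν : 0 < ν) (x : ℝ) :
    HasDerivAt (fun η => -ν ^ 2 * gpdf m ν η) ((x - m) * gpdf m ν x) x := by
  have hν2 : (ν : ℝ) ^ 2 ≠ 0 := by positivity
  have h0 : HasDerivAt (fun η : ℝ => (η - m) ^ 2) (2 * (x - m)) x := by
    have := (hasDerivAt_pow 2 (x - m)).comp x ((hasDerivAt_id x).sub_const m)
    simp at this
    exact this
  have h1 : HasDerivAt (fun η : ℝ => -((η - m) ^ 2) / (2 * ν ^ 2))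
      (-(x - m) / ν ^ 2) x := by
    have := h0.neg.div_const (2 * ν ^ 2)
    refine this.congr_deriv ?_
    rw [mul_comm 2 (x - m), mul_comm 2 (ν ^ 2), neg_div, neg_div, mul_div_mul_right _ _ two_ne_zero]
  have h2 := (h1.exp.const_mul ((Real.sqrt (2 * Real.pi * ν ^ 2))⁻¹)).const_mul (-ν ^ 2)
  refine h2.congr_deriv ?_
  symm
  show (x - m) * gpdf m ν x = _
  unfold gpdf
  field_simp

lemma tendsto_gpdf_atTop (m ν : ℝ) (hν : 0 < ν) :
    Tendsto (fun η => -ν ^ 2 * gpdf m ν η) atTop (nhds 0) := by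
  have hsq : Tendsto (fun x : ℝ => (x - m) ^ 2) atTop atTop := by
    have habs : Tendsto (fun x : ℝ => |x - m|) atTop atTop :=
      tendsto_abs_atTop_atTop.comp (tendsto_atTop_add_const_right _ (-m) tendsto_id)
    simpa [Function.comp_def, sq_abs] using (tendsto_pow_atTop (two_ne_zero)).comp habs
  have hg : Tendsto (fun x : ℝ => -((x - m) ^ 2) / (2 * ν ^ 2)) atTop atBot := by
    simp only [neg_div]
    exact tendsto_neg_atTop_atBot.comp (hsq.atTop_div_const (by positivity))
  have := ((Real.tendsto_exp_atBot.comp hg).const_mul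
    ((Real.sqrt (2 * Real.pi * ν ^ 2))⁻¹)).const_mul (-ν ^ 2)
  simpa [gpdf, Function.comp_def] using this

lemma tendsto_gpdf_atBot (m ν : ℝ) (hν : 0 < ν) :
    Tendsto (fun η => -ν ^ 2 * gpdf m ν η) atBot (nhds 0) := by
  have hsq : Tendsto (fun x : ℝ => (x - m) ^ 2) atBot atTop := by
    have habs : Tendsto (fun x : ℝ => |x - m|) atBot atTop :=
      tendsto_abs_atBot_atTop.comp (tendsto_atBot_add_const_right _ (-m) tendsto_id)
    simpa [Function.comp_def, sq_abs] using (tendsto_pow_atTop (two_ne_zero)).comp habs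
  have hg : Tendsto (fun x : ℝ => -((x - m) ^ 2) / (2 * ν ^ 2)) atBot atBot := by
    simp only [neg_div]
    exact tendsto_neg_atTop_atBot.comp (hsq.atTop_div_const (by positivity))
  have := ((Real.tendsto_exp_atBot.comp hg).const_mul
    ((Real.sqrt (2 * Real.pi * ν ^ 2))⁻¹)).const_mul (-ν ^ 2)
  simpa [gpdf, Function.comp_def] using this

lemma integrable_sub_mul_gpdf (m ν : ℝ) (hν : 0 < ν) :
    Integrable (fun η => (η - m) * gpdf m ν η) := by
  have hb : (0 : ℝ) < (2 * ν ^ 2)⁻¹ := by positivity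
  have h1 : Integrable (fun x : ℝ => x * Real.exp (-(2 * ν ^ 2)⁻¹ * x ^ 2)) :=
    integrable_mul_exp_neg_mul_sq hb
  have h2 := (h1.comp_sub_right m).const_mul ((Real.sqrt (2 * Real.pi * ν ^ 2))⁻¹)
  refine h2.congr (Filter.Eventually.of_forall fun x => ?_)
  simp only [gpdf]
  rw [show -((x - m) ^ 2) / (2 * ν ^ 2) = -(2 * ν ^ 2)⁻¹ * (x - m) ^ 2 from by ring]
  ring

lemma integrable_abs_sub_mul_gpdf (m ν : ℝ) (hν : 0 < ν) :
    Integrable (fun η => |η - m| * gpdf m ν η) := by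
  refine (integrable_sub_mul_gpdf m ν hν).abs.congr
    (Filter.Eventually.of_forall fun x => ?_)
  simp only [abs_mul]
  rw [abs_of_nonneg (gpdf_nonneg m ν x)]

theorem quantile_Psi0 (y τ m ν : ℝ) (hτ : τ ∈ Set.Ioo (0 : ℝ) 1) (hν : 0 < ν) :
    ∫ η, ((1 / 2) * |y - η| + (τ - 1 / 2) * (y - η)) * gpdf m ν η
      = (y - m) * (gcdf m ν y + τ - 1) + ν ^ 2 * gpdf m ν y := by
  have hint : Integrable (gpdf m ν) := integrable_gpdf m ν
  have hint1 : Integrable (fun η => (η - m) * gpdf m ν η) := integrable_sub_mul_gpdf m ν hν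
  have hintabs : Integrable (fun η => |y - η| * gpdf m ν η) := by
    refine Integrable.mono' ((hint.const_mul |y - m|).add
      (integrable_abs_sub_mul_gpdf m ν hν)) ?_ (Filter.Eventually.of_forall fun x => ?_)
    · exact (((continuous_const.sub continuous_id).abs).mul (continuous_gpdf m ν)).aestronglyMeasurable
    · rw [Real.norm_eq_abs, abs_mul, abs_abs, abs_of_nonneg (gpdf_nonneg m ν x)]
      simp only [Pi.add_apply]
      have h1 : |y - x| ≤ |y - m| + |x - m| := by
        calc |y - x| = |(y - m) + (m - x)| := by congr 1; ring
          _ ≤ |y - m| + |m - x| := abs_add_le _ _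
          _ = |y - m| + |x - m| := by rw [abs_sub_comm m x]
      nlinarith [gpdf_nonneg m ν x, abs_nonneg (y - x), abs_nonneg (x - m), abs_nonneg (y - m)]
  have hintsub : Integrable (fun η => (y - η) * gpdf m ν η) := by
    have := (hint.const_mul (y - m)).sub hint1
    refine this.congr (Filter.Eventually.of_forall fun x => ?_)
    simp only [Pi.sub_apply]
    ring
  have hintF : Integrable (fun η => ((1 / 2) * |y - η| + (τ - 1 / 2) * (y - η)) * gpdf m ν η) := by
    have := (hintabs.const_mul (1 / 2)).add (hintsub.const_mul (τ - 1 / 2))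
    refine this.congr (Filter.Eventually.of_forall fun x => ?_)
    simp only [Pi.add_apply]
    ring
  -- FTC computations
  have key1 : ∫ η in Set.Iic y, (η - m) * gpdf m ν η = -ν ^ 2 * gpdf m ν y := by
    have := integral_Iic_of_hasDerivAt_of_tendsto' (a := y)
      (fun x _ => hasDerivAt_gpdf m ν hν x) hint1.integrableOn (tendsto_gpdf_atBot m ν hν)
    simpa using this
  have key2 : ∫ η in Set.Ioi y, (η - m) * gpdf m ν η = ν ^ 2 * gpdf m ν y := by
    have := integral_Ioi_of_hasDerivAt_of_tendsto' (a := y)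
      (fun x _ => hasDerivAt_gpdf m ν hν x) hint1.integrableOn (tendsto_gpdf_atTop m ν hν)
    rw [this]
    ring
  have key3 : ∫ η in Set.Iic y, gpdf m ν η = gcdf m ν y := by
    rw [gcdf]
    exact (setIntegral_congr_set Iio_ae_eq_Iic).symm
  have key4 : ∫ η in Set.Ioi y, gpdf m ν η = 1 - gcdf m ν y := by
    have := intervalIntegral.integral_Iic_add_Ioi (f := gpdf m ν) (b := y) (μ := volume)
      hint.integrableOn hint.integrableOn
    rw [key3, integral_gpdf m ν hν] at this
    linarith
  -- split the integral
  rw [← intervalIntegral.integral_Iic_add_Ioi hintF.integrableOn hintF.integrableOn]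
  have hleft : ∫ η in Set.Iic y, ((1 / 2) * |y - η| + (τ - 1 / 2) * (y - η)) * gpdf m ν η
      = τ * ((y - m) * gcdf m ν y + ν ^ 2 * gpdf m ν y) := by
    have heq : ∀ η ∈ Set.Iic y, ((1 / 2) * |y - η| + (τ - 1 / 2) * (y - η)) * gpdf m ν η
        = τ * ((y - m) * gpdf m ν η - (η - m) * gpdf m ν η) := by
      intro η hη
      rw [abs_of_nonneg (by simpa using hη)]
      ring
    rw [setIntegral_congr_fun measurableSet_Iic heq, integral_const_mul,
      integral_sub ((hint.const_mul (y - m)).integrableOn) hint1.integrableOn,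
      integral_const_mul, key1, key3]
    ring
  have hright : ∫ η in Set.Ioi y, ((1 / 2) * |y - η| + (τ - 1 / 2) * (y - η)) * gpdf m ν η
      = (τ - 1) * ((y - m) * (1 - gcdf m ν y) - ν ^ 2 * gpdf m ν y) := by
    have heq : ∀ η ∈ Set.Ioi y, ((1 / 2) * |y - η| + (τ - 1 / 2) * (y - η)) * gpdf m ν η
        = (τ - 1) * ((y - m) * gpdf m ν η - (η - m) * gpdf m ν η) := by
      intro η hη
      rw [abs_of_nonpos (by simp at hη ⊢; linarith)]
      ring
    rw [setIntegral_congr_fun measurableSet_Ioi heq, integral_const_mul,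
      integral_sub ((hint.const_mul (y - m)).integrableOn) hint1.integrableOn,
      integral_const_mul, key2, key4]
  rw [hleft, hright]
  ring
end

section
/- Fix y ∈ {−1, +1} and ν > 0, and define Ψ₀(m) = ∫ 2·max(0, 1 − yη) φ(η; m, ν²) dη. Then for every m ∈ ℝ, the derivative of Ψ₀ with respect to m equals −2y Φ(1; ym, ν²). -/
open MeasureTheory Real Filter

section Aux
open Set
variable {ν : ℝ}

lemma gpdf_cont (m : ℝ) : Continuous (gpdf m ν) := by
  unfold gpdf; fun_prop

lemma gpdf_eq_s15 (m x : ℝ) : gpdf m ν x =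
    (Real.sqrt (2 * Real.pi * ν ^ 2))⁻¹ * Real.exp (-((2 * ν ^ 2)⁻¹ * (x - m) ^ 2)) := by
  unfold gpdf; ring_nf

lemma gpdf_integrable (hν : 0 < ν) (m : ℝ) : Integrable (gpdf m ν) := by
  have hb : 0 < (2 * ν ^ 2)⁻¹ := by positivity
  have h := ((integrable_exp_neg_mul_sq hb).comp_sub_right m).const_mul
    ((Real.sqrt (2 * Real.pi * ν ^ 2))⁻¹)
  refine h.congr ?_
  filter_upwards with x
  rw [gpdf_eq_s15, neg_mul]

lemma gpdf_mul_integrable (hν : 0 < ν) (m : ℝ) :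
    Integrable (fun x => (x - m) * gpdf m ν x) := by
  have hb : 0 < (2 * ν ^ 2)⁻¹ := by positivity
  have h := ((integrable_mul_exp_neg_mul_sq hb).comp_sub_right m).const_mul
    ((Real.sqrt (2 * Real.pi * ν ^ 2))⁻¹)
  refine h.congr ?_
  filter_upwards with x
  rw [gpdf_eq_s15]; ring_nf

lemma gpdf_hasDerivAt (hν : 0 < ν) (m η : ℝ) :
    HasDerivAt (fun x => 2 * ν ^ 2 * gpdf m ν x) (-(2 * (η - m) * gpdf m ν η)) η := by
  have hν2 : (ν : ℝ) ^ 2 ≠ 0 := by positivity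
  have h1 : HasDerivAt (fun x : ℝ => -((x - m) ^ 2) / (2 * ν ^ 2))
      (-(2 * (η - m)) / (2 * ν ^ 2)) η := by
    have := (((hasDerivAt_id η).sub_const m).pow 2).neg.div_const (2 * ν ^ 2)
    simpa using this
  have h2 := (h1.exp.const_mul ((Real.sqrt (2 * Real.pi * ν ^ 2))⁻¹)).const_mul (2 * ν ^ 2)
  refine h2.congr_deriv ?_
  unfold gpdf; field_simp

lemma gpdf_tendsto_atBot (hν : 0 < ν) (m : ℝ) :
    Tendsto (gpdf m ν) atBot (nhds 0) := by
  have h1 : Tendsto (fun x : ℝ => -((x - m) ^ 2) / (2 * ν ^ 2)) atBot atBot := by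
    have habs : Tendsto (fun x : ℝ => |x - m|) atBot atTop :=
      tendsto_abs_atBot_atTop.comp (tendsto_atBot_add_const_right _ (-m) tendsto_id)
    have hsq : Tendsto (fun x : ℝ => |x - m| ^ 2) atBot atTop :=
      (tendsto_pow_atTop (two_ne_zero)).comp habs
    have hdiv : Tendsto (fun x : ℝ => |x - m| ^ 2 / (2 * ν ^ 2)) atBot atTop :=
      hsq.atTop_div_const (by positivity)
    have := tendsto_neg_atTop_atBot.comp hdiv
    refine this.congr fun x => ?_
    simp [sq_abs, neg_div]
  have := (Real.tendsto_exp_atBot.comp h1).const_mul ((Real.sqrt (2 * Real.pi * ν ^ 2))⁻¹)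
  rw [mul_zero] at this
  exact this

lemma integral_deriv_part (hν : 0 < ν) (m : ℝ) :
    ∫ x in Iio 1, -(2 * (x - m) * gpdf m ν x) = 2 * ν ^ 2 * gpdf m ν 1 := by
  have h1 : ∫ x in Iio 1, -(2 * (x - m) * gpdf m ν x)
      = ∫ x in Iic 1, -(2 * (x - m) * gpdf m ν x) :=
    (integral_Iic_eq_integral_Iio).symm
  have h2 : ∫ x in Iic (1:ℝ), -(2 * (x - m) * gpdf m ν x)
      = ∫ x in Ioi (-1:ℝ), -(2 * ((-x) - m) * gpdf m ν (-x)) := by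
    have h := integral_comp_neg_Ioi (-1:ℝ) (fun x => -(2 * (x - m) * gpdf m ν x))
    simp only [neg_neg] at h
    exact h.symm
  rw [h1, h2]
  have key := integral_Ioi_of_hasDerivAt_of_tendsto'
    (f := fun x => -(2 * ν ^ 2 * gpdf m ν (-x)))
    (f' := fun x => -(2 * ((-x) - m) * gpdf m ν (-x))) (a := -1)
    (m := 0) ?_ ?_ ?_
  · rw [key]; norm_num
  · intro x _
    have h := ((gpdf_hasDerivAt hν m (-x)).comp x (hasDerivAt_neg x)).neg
    simpa [Function.comp_def, Pi.neg_def] using h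
  · have : Integrable (fun x => -(2 * ((-x) - m) * gpdf m ν (-x))) := by
      have := ((gpdf_mul_integrable hν m).const_mul 2).neg.comp_neg
      simpa [mul_assoc] using this
    exact this.integrableOn
  · have h := (gpdf_tendsto_atBot hν m).comp tendsto_neg_atTop_atBot
    have h2 := (h.const_mul (2 * ν ^ 2)).neg
    simpa using h2

lemma Psi_eq (hν : 0 < ν) (m : ℝ) :
    ∫ η, 2 * max 0 (1 - η) * gpdf m ν η
      = 2 * (1 - m) * gcdf m ν 1 + 2 * ν ^ 2 * gpdf m ν 1 := by
  have hind : (fun η => 2 * max 0 (1 - η) * gpdf m ν η)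
      = Set.indicator (Iio 1)
        (fun η => (2 * (1 - m)) * gpdf m ν η + -(2 * (η - m) * gpdf m ν η)) := by
    funext η
    by_cases h : η < 1
    · rw [Set.indicator_of_mem (by simpa using h)]
      rw [max_eq_right (by linarith)]
      ring
    · rw [Set.indicator_of_notMem (by simpa using h)]
      rw [max_eq_left (by linarith)]
      ring
  rw [hind, integral_indicator measurableSet_Iio]
  rw [integral_add (((gpdf_integrable hν m).const_mul _).integrableOn)
    (((gpdf_mul_integrable hν m).const_mul 2).neg.congr (by
      filter_upwards with x; simp only [Pi.neg_apply]; ring)).integrableOn]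
  rw [MeasureTheory.integral_const_mul, integral_deriv_part hν m]
  rfl

lemma integral_Iic_comp_sub (f : ℝ → ℝ) (c a : ℝ) :
    ∫ x in Iic c, f (x - a) = ∫ x in Iic (c - a), f x := by
  have A : MeasurableEmbedding (fun x : ℝ => x - a) :=
    (Homeomorph.subRight a).isClosedEmbedding.measurableEmbedding
  have h := A.setIntegral_map (μ := volume) f (Iic (c - a))
  have hmap : Measure.map (fun x : ℝ => x - a) volume = volume := by
    simp_rw [sub_eq_add_neg]
    exact map_add_right_eq_self volume (-a)
  rw [hmap] at h
  have hpre : (fun x : ℝ => x - a) ⁻¹' Iic (c - a) = Iic c := by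
    ext x; simp [sub_le_sub_iff_right]
  rw [hpre] at h
  exact h.symm

lemma gcdf_shift (a : ℝ) : gcdf a ν 1 = ∫ x in Iic (1 - a), gpdf 0 ν x := by
  unfold gcdf
  rw [← integral_Iic_eq_integral_Iio, ← integral_Iic_comp_sub (gpdf 0 ν) 1 a]
  congr 1; funext x
  unfold gpdf; rw [sub_zero]

lemma gcdf_hasDerivAt (hν : 0 < ν) (a : ℝ) :
    HasDerivAt (fun a => gcdf a ν 1) (-(gpdf a ν 1)) a := by
  set F : ℝ → ℝ := fun c => ∫ x in Iic c, gpdf 0 ν x with hF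
  have hFder : ∀ c, HasDerivAt F (gpdf 0 ν c) c := by
    intro c
    have hI : ∀ b, IntegrableOn (gpdf 0 ν) (Iic b) := fun b =>
      (gpdf_integrable hν 0).integrableOn
    have hFeq : ∀ b, F b = (∫ x in (0:ℝ)..b, gpdf 0 ν x) + F 0 := by
      intro b
      rw [← intervalIntegral.integral_Iic_sub_Iic (hI 0) (hI b)]
      ring
    have hd : HasDerivAt (fun b => (∫ x in (0:ℝ)..b, gpdf 0 ν x) + F 0) (gpdf 0 ν c) c := by
      refine HasDerivAt.add_const (F 0) ?_
      exact intervalIntegral.integral_hasDerivAt_right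
        ((gpdf_integrable hν 0).intervalIntegrable)
        ((gpdf_cont 0).stronglyMeasurable.stronglyMeasurableAtFilter)
        (gpdf_cont 0).continuousAt
    exact hd.congr_of_eventuallyEq (Filter.Eventually.of_forall hFeq)
  have h := (hFder (1 - a)).comp a ((hasDerivAt_id a).const_sub 1)
  have heq : (fun a => gcdf a ν 1) = fun a => F (1 - a) :=
    funext fun a => gcdf_shift a
  rw [heq]
  refine h.congr_deriv ?_
  unfold gpdf
  rw [sub_zero]
  ring

lemma gpdf_one_hasDerivAt (hν : 0 < ν) (a : ℝ) :
    HasDerivAt (fun a => gpdf a ν 1) ((1 - a) / ν ^ 2 * gpdf a ν 1) a := by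
  have hν2 : (ν : ℝ) ^ 2 ≠ 0 := by positivity
  have h1 : HasDerivAt (fun a : ℝ => -((1 - a) ^ 2) / (2 * ν ^ 2))
      ((2 * (1 - a)) / (2 * ν ^ 2)) a := by
    have := (((hasDerivAt_id a).const_sub 1).pow 2).neg.div_const (2 * ν ^ 2)
    refine this.congr_deriv ?_
    simp only [id_eq]
    ring
  have h2 := h1.exp.const_mul ((Real.sqrt (2 * Real.pi * ν ^ 2))⁻¹)
  refine h2.congr_deriv ?_
  unfold gpdf; field_simp

lemma PsiClosed_hasDerivAt (hν : 0 < ν) (m : ℝ) :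
    HasDerivAt (fun m => 2 * (1 - m) * gcdf m ν 1 + 2 * ν ^ 2 * gpdf m ν 1)
      (-2 * gcdf m ν 1) m := by
  have hν2 : (ν : ℝ) ^ 2 ≠ 0 := by positivity
  have hA : HasDerivAt (fun m : ℝ => 2 * (1 - m)) (-2) m := by
    have := ((hasDerivAt_id m).const_sub 1).const_mul 2
    refine this.congr_deriv ?_
    norm_num
  have h1 := hA.mul (gcdf_hasDerivAt hν m)
  have h2 := (gpdf_one_hasDerivAt hν m).const_mul (2 * ν ^ 2)
  have h := h1.add h2
  refine h.congr_deriv ?_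
  field_simp
  ring

lemma Psi1_hasDerivAt (hν : 0 < ν) (m : ℝ) :
    HasDerivAt (fun m' => ∫ η, 2 * max 0 (1 - η) * gpdf m' ν η)
      (-2 * gcdf m ν 1) m :=
  (PsiClosed_hasDerivAt hν m).congr_of_eventuallyEq
    (Filter.Eventually.of_forall fun m' => Psi_eq hν m')

end Aux

theorem svc_Psi1 (y ν : ℝ) (hy : y = -1 ∨ y = 1) (hν : 0 < ν) (m : ℝ) :
    HasDerivAt (fun m' => ∫ η, 2 * max 0 (1 - y * η) * gpdf m' ν η)
      (-2 * y * gcdf (y * m) ν 1) m := by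
  rcases hy with rfl | rfl
  · -- y = -1
    have heq : ∀ m' : ℝ, ∫ η, 2 * max 0 (1 - (-1) * η) * gpdf m' ν η
        = ∫ η, 2 * max 0 (1 - η) * gpdf (-m') ν η := by
      intro m'
      conv_rhs => rw [← integral_neg_eq_self]
      congr 1; funext η
      have h1 : (1 : ℝ) - -η = 1 - (-1) * η := by ring
      have h2 : gpdf (-m') ν (-η) = gpdf m' ν η := by
        unfold gpdf; congr 2; ring
      rw [h1, h2]
    have h := (Psi1_hasDerivAt hν (-m)).comp m (hasDerivAt_neg m)
    have h' : HasDerivAt (fun m' : ℝ => ∫ η, 2 * max 0 (1 - (-1) * η) * gpdf m' ν η)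
        (-2 * gcdf (-m) ν 1 * -1) m :=
      h.congr_of_eventuallyEq (Filter.Eventually.of_forall fun m' => by
        simpa [Function.comp] using heq m')
    convert h' using 1
    ring_nf
  · -- y = 1
    have h := Psi1_hasDerivAt hν m
    have h' : HasDerivAt (fun m' : ℝ => ∫ η, 2 * max 0 (1 - 1 * η) * gpdf m' ν η)
        (-2 * gcdf m ν 1) m := by
      simpa [one_mul] using h
    convert h' using 1
    ring_nf
end
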